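/- Let Cyl(X̄) denote the unital star-subalgebra of C(X̄, ℂ) consisting of the cylindrical functions on the projective limit X̄ of a compact Hausdorff projective family. The map which assigns to each point x ∈ X̄ the evaluation homomorphism Cyl(X̄) → ℂ, f ↦ f(x), is a bijection from X̄ onto the set of all sup-norm-continuous unital star-algebra homomorphisms from Cyl(X̄) to ℂ. -/

import Mathlib

/-- The projective limit of a projective family, as a subspace of the product space. -/
def ProjLim {L : Type*} [PartialOrder L] (X : L → Type*)
    (p : ∀ S S', S ≤ S' → X S' → X S) : Type _ :=
  {x : ∀ S, X S // ∀ S S' (h : S ≤ S'), p S S' h (x S') = x S}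

/-- The Tychonov (subspace-of-product) topology on the projective limit. -/
instance {L : Type*} [PartialOrder L] (X : L → Type*) [∀ S, TopologicalSpace (X S)]
    (p : ∀ S S', S ≤ S' → X S' → X S) : TopologicalSpace (ProjLim X p) :=
  inferInstanceAs (TopologicalSpace {x : ∀ S, X S // ∀ S S' (h : S ≤ S'), p S S' h (x S') = x S})

/-- A cylindrical function on the projective limit: a function of the form `f ∘ p_S`
for some `S ∈ L` and some continuous `f : X S → ℂ`. -/
def IsCyl {L : Type*} [PartialOrder L] (X : L → Type*) [∀ S, TopologicalSpace (X S)]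
    (p : ∀ S S', S ≤ S' → X S' → X S) (F : ProjLim X p → ℂ) : Prop :=
  ∃ (S : L) (f : X S → ℂ), Continuous f ∧ F = fun x => f (x.1 S)

/-- The set `Cyl(X̄)` of cylindrical functions, as a type. -/
def Cyl {L : Type*} [PartialOrder L] (X : L → Type*) [∀ S, TopologicalSpace (X S)]
    (p : ∀ S S', S ≤ S' → X S' → X S) : Type _ :=
  {F : ProjLim X p → ℂ // IsCyl X p F}

/-- The evaluation map: a point `x ∈ X̄` gives the homomorphism `Cyl(X̄) → ℂ`, `F ↦ F x`. -/
def evalAt {L : Type*} [PartialOrder L] (X : L → Type*) [∀ S, TopologicalSpace (X S)]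
    (p : ∀ S S', S ≤ S' → X S' → X S) (x : ProjLim X p) : Cyl X p → ℂ :=
  fun F => F.1 x

/-- `h : Cyl(X̄) → ℂ` is a sup-norm-continuous unital star-algebra homomorphism:
it sends 1 to 1, is additive, multiplicative, ℂ-homogeneous, star-preserving, and
(uniformly) continuous for the supremum norm. -/
def IsContStarHom {L : Type*} [PartialOrder L] (X : L → Type*) [∀ S, TopologicalSpace (X S)]
    (p : ∀ S S', S ≤ S' → X S' → X S) (h : Cyl X p → ℂ) : Prop :=
  (∀ F : Cyl X p, (∀ x, F.1 x = 1) → h F = 1) ∧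
  (∀ F G K : Cyl X p, (∀ x, K.1 x = F.1 x + G.1 x) → h K = h F + h G) ∧
  (∀ F G K : Cyl X p, (∀ x, K.1 x = F.1 x * G.1 x) → h K = h F * h G) ∧
  (∀ (c : ℂ) (F K : Cyl X p), (∀ x, K.1 x = c * F.1 x) → h K = c * h F) ∧
  (∀ F K : Cyl X p, (∀ x, K.1 x = starRingEnd ℂ (F.1 x)) → h K = starRingEnd ℂ (h F)) ∧
  (∀ ε : ℝ, 0 < ε → ∃ δ : ℝ, 0 < δ ∧ ∀ F G : Cyl X p,
    (∀ x, ‖F.1 x - G.1 x‖ ≤ δ) → ‖h F - h G‖ ≤ ε)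

open WeakDual WeakDual.CharacterSpace in
/-- Continuous complex-valued functions separate points on a compact Hausdorff space. -/
lemma sep_points {Y : Type*} [TopologicalSpace Y] [CompactSpace Y] [T2Space Y]
    {a b : Y} (hab : ∀ f : C(Y, ℂ), f a = f b) : a = b := by
  apply (homeoEval Y ℂ).injective
  apply Subtype.ext
  apply ContinuousLinearMap.ext
  intro f
  exact hab f

/-- The evaluation map `x ↦ (F ↦ F x)` is a bijection from the projective
limit `X̄` onto the set of sup-norm-continuous unital star-algebra homomorphisms from
`Cyl(X̄)` to `ℂ` (Gel'fand spectrum). -/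
theorem evalAt_bijective_onto_spectrum
    {L : Type*} [PartialOrder L] [IsDirected L (· ≤ ·)] [Nonempty L]
    (X : L → Type*) [∀ S, TopologicalSpace (X S)]
    [∀ S, CompactSpace (X S)] [∀ S, T2Space (X S)] [∀ S, Nonempty (X S)]
    (p : ∀ S S', S ≤ S' → X S' → X S)
    (hp_cont : ∀ S S' (h : S ≤ S'), Continuous (p S S' h))
    (hp_surj : ∀ S S' (h : S ≤ S'), Function.Surjective (p S S' h))
    (hp_id : ∀ S, p S S le_rfl = id)
    (hp_comp : ∀ S S' S'' (h : S ≤ S') (h' : S' ≤ S''),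
      p S S' h ∘ p S' S'' h' = p S S'' (h.trans h')) :
    (∀ x : ProjLim X p, IsContStarHom X p (evalAt X p x)) ∧
    Function.Injective (evalAt X p) ∧
    (∀ h : Cyl X p → ℂ, IsContStarHom X p h → ∃ x : ProjLim X p, evalAt X p x = h) := by
    classical
  refine ⟨?_, ?_, ?_⟩
  · intro x
    exact ⟨fun F hF => hF x, fun F G K hK => hK x, fun F G K hK => hK x,
      fun c F K hK => hK x, fun F K hK => hK x,
      fun ε hε => ⟨ε, hε, fun F G hFG => hFG x⟩⟩
  · intro x y hxy
    apply Subtype.ext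
    funext S
    apply sep_points
    intro f
    exact congrFun hxy ⟨fun z => f (z.1 S), S, f, f.continuous, rfl⟩
  · intro h hh
    obtain ⟨h1, hadd, hmul, hsmul, hstar, hcont⟩ := hh
    set cylOf : ∀ S : L, C(X S, ℂ) → Cyl X p :=
      fun S f => ⟨fun z => f (z.1 S), S, f, f.continuous, rfl⟩ with hcylOf
    have hzero : ∀ S : L, h (cylOf S 0) = 0 := by
      intro S
      have := hsmul 0 (cylOf S 0) (cylOf S 0) (fun x => by simp [hcylOf])
      simpa using this
    set Φ : ∀ S : L, C(X S, ℂ) →ₐ[ℂ] ℂ := fun S =>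
      { toFun := fun f => h (cylOf S f)
        map_one' := h1 _ (fun x => rfl)
        map_mul' := fun f g => hmul (cylOf S f) (cylOf S g) _ (fun x => rfl)
        map_zero' := hzero S
        map_add' := fun f g => hadd (cylOf S f) (cylOf S g) _ (fun x => rfl)
        commutes' := fun c => by
          have hc : h (cylOf S (algebraMap ℂ C(X S, ℂ) c)) = c * h (cylOf S 1) := by
            apply hsmul c (cylOf S 1) (cylOf S (algebraMap ℂ C(X S, ℂ) c))
            intro x
            simp [hcylOf]
          show h (cylOf S ((algebraMap ℂ C(X S, ℂ)) c)) = algebraMap ℂ ℂ c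
          rw [hc, h1 _ (fun x => rfl), mul_one]
          rfl } with hΦ
    set xS : ∀ S : L, X S := fun S =>
      (WeakDual.CharacterSpace.homeoEval (X S) ℂ).symm
        (WeakDual.CharacterSpace.equivAlgHom.symm (Φ S)) with hxS
    have key : ∀ (S : L) (f : C(X S, ℂ)), f (xS S) = h (cylOf S f) := by
      intro S f
      have h2 : ((WeakDual.CharacterSpace.homeoEval (X S) ℂ) (xS S) :
          WeakDual ℂ C(X S, ℂ)) f = f (xS S) := rfl
      rw [← h2, hxS]
      rw [Homeomorph.apply_symm_apply]
      exact congrFun (WeakDual.CharacterSpace.equivAlgHom_symm_coe (Φ S)) f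
    have compat : ∀ S S' (hle : S ≤ S'), p S S' hle (xS S') = xS S := by
      intro S S' hle
      apply sep_points
      intro f
      have e1 : f (p S S' hle (xS S')) =
          (f.comp ⟨p S S' hle, hp_cont S S' hle⟩) (xS S') := rfl
      rw [e1, key S' (f.comp ⟨p S S' hle, hp_cont S S' hle⟩), key S f]
      congr 1
      apply Subtype.ext
      funext z
      show f (p S S' hle (z.1 S')) = f (z.1 S)
      rw [z.2 S S' hle]
    refine ⟨⟨xS, compat⟩, ?_⟩
    funext K
    obtain ⟨S, f, hf, hK⟩ := K.2
    have e2 : evalAt X p ⟨xS, compat⟩ K = f (xS S) := by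
      show K.1 ⟨xS, compat⟩ = f (xS S)
      rw [hK]
    rw [e2]
    refine (key S ⟨f, hf⟩).trans ?_
    congr 1
    apply Subtype.ext
    exact hK.symm
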